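/- For the two-level last-passage values H defined from given weights J_m, (I_i)_{m<i≤n}, (ω_i)_{m<i≤n} by H_{(m,0),(n,0)} = Σ_{i=m+1}^n I_i, H_{(m,0),(m,1)} = J_m, and H_{(m,0),(n,1)} = max( J_m + Σ_{i=m+1}^n ω_i, max_{m+1≤j≤n} [ Σ_{i=m+1}^j I_i + Σ_{i=j}^n ω_i ] ), and with (Ĩ_k, J_k, ω̃_k) computed by the queueing recursion Ĩ_k = ω_k + (I_k − J_{k−1})^+, J_k = ω_k + (J_{k−1} − I_k)^+, one has for every k in [m, n]: H_{(m,0),(n,1)} = I_{m+1} + ⋯ + I_k + J_k + Ĩ_{k+1} + ⋯ + Ĩ_n. -/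

import Mathlib

private lemma Icc_ins_top (a b : ℤ) (h : a ≤ b + 1) :
    Finset.Icc a (b + 1) = insert (b + 1) (Finset.Icc a b) := by
  ext x; simp [Finset.mem_Icc]; omega

private lemma Icc_ins_bot (a b : ℤ) (h : a ≤ b) :
    Finset.Icc a b = insert a (Finset.Icc (a + 1) b) := by
  ext x; simp [Finset.mem_Icc]; omega

private lemma sum_ins_top (a b : ℤ) (h : a ≤ b + 1) (f : ℤ → ℝ) :
    ∑ i ∈ Finset.Icc a (b + 1), f i = (∑ i ∈ Finset.Icc a b, f i) + f (b + 1) := by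
  rw [Icc_ins_top a b h, Finset.sum_insert (by simp)]
  ring

private lemma sum_ins_bot (a b : ℤ) (h : a ≤ b) (f : ℤ → ℝ) :
    ∑ i ∈ Finset.Icc a b, f i = f a + ∑ i ∈ Finset.Icc (a + 1) b, f i := by
  rw [Icc_ins_bot a b h, Finset.sum_insert (by simp)]

/-- The sup equals the value at `k = n`. -/
private lemma sup_aux (m : ℤ) (I ω J : ℤ → ℝ) :
    ∀ n, ∀ hn : m ≤ n, (∀ k, m < k → k ≤ n → J k = ω k + max (J (k - 1) - I k) 0) →
    Finset.sup' (Finset.Icc m n) (Finset.nonempty_Icc.mpr hn)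
        (fun j => if j = m then J m + ∑ i ∈ Finset.Icc (m + 1) n, ω i
          else (∑ i ∈ Finset.Icc (m + 1) j, I i) + ∑ i ∈ Finset.Icc j n, ω i)
      = (∑ i ∈ Finset.Icc (m + 1) n, I i) + J n := by
  intro n hn
  refine Int.le_induction (motive := fun n _ =>
      ∀ hn : m ≤ n, (∀ k, m < k → k ≤ n → J k = ω k + max (J (k - 1) - I k) 0) →
      Finset.sup' (Finset.Icc m n) (Finset.nonempty_Icc.mpr hn)
          (fun j => if j = m then J m + ∑ i ∈ Finset.Icc (m + 1) n, ω i
            else (∑ i ∈ Finset.Icc (m + 1) j, I i) + ∑ i ∈ Finset.Icc j n, ω i)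
        = (∑ i ∈ Finset.Icc (m + 1) n, I i) + J n) ?_ ?_ n hn hn
  · -- base case n = m
    intro _ _
    rw [Finset.sup'_congr (Finset.nonempty_Icc.mpr le_rfl) (Finset.Icc_self m)
      (fun _ _ => rfl), Finset.sup'_singleton]
    simp
  · -- inductive step
    intro n hmn ih _ hJ
    have ih := ih hmn
    have hne : (Finset.Icc m n).Nonempty := Finset.nonempty_Icc.mpr hmn
    have key : Finset.sup' (Finset.Icc m (n + 1)) (Finset.nonempty_Icc.mpr (by omega))
        (fun j => if j = m then J m + ∑ i ∈ Finset.Icc (m + 1) (n + 1), ω i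
          else (∑ i ∈ Finset.Icc (m + 1) j, I i) + ∑ i ∈ Finset.Icc j (n + 1), ω i)
        = max ((∑ i ∈ Finset.Icc (m + 1) (n + 1), I i) + ∑ i ∈ Finset.Icc (n+1) (n+1), ω i)
            (Finset.sup' (Finset.Icc m n) hne
              (fun j => (if j = m then J m + ∑ i ∈ Finset.Icc (m + 1) n, ω i
                else (∑ i ∈ Finset.Icc (m + 1) j, I i) + ∑ i ∈ Finset.Icc j n, ω i)
                + ω (n + 1))) := by
      rw [Finset.sup'_congr (Finset.nonempty_Icc.mpr (by omega)) (Icc_ins_top m n (by omega))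
        (fun _ _ => rfl)]
      rw [Finset.sup'_insert (H := hne)]
      congr 1
      · simp only [show n + 1 ≠ m by omega, if_neg]
        simp
      · apply Finset.sup'_congr hne rfl
        intro j hj
        rw [Finset.mem_Icc] at hj
        by_cases h : j = m
        · simp only [if_pos h]
          rw [sum_ins_top (m+1) n (by omega)]
          ring
        · simp only [if_neg h]
          rw [sum_ins_top j n (by omega)]
          ring
    rw [key]
    have comp := Finset.comp_sup'_eq_sup'_comp (f := fun j =>
        if j = m then J m + ∑ i ∈ Finset.Icc (m + 1) n, ω i
          else (∑ i ∈ Finset.Icc (m + 1) j, I i) + ∑ i ∈ Finset.Icc j n, ω i)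
        hne (fun x : ℝ => x + ω (n + 1)) (fun x y => (max_add_add_right x y _).symm)
    rw [show (fun j => (if j = m then J m + ∑ i ∈ Finset.Icc (m + 1) n, ω i
          else (∑ i ∈ Finset.Icc (m + 1) j, I i) + ∑ i ∈ Finset.Icc j n, ω i) + ω (n + 1))
        = ((fun x : ℝ => x + ω (n + 1)) ∘ (fun j =>
          if j = m then J m + ∑ i ∈ Finset.Icc (m + 1) n, ω i
          else (∑ i ∈ Finset.Icc (m + 1) j, I i) + ∑ i ∈ Finset.Icc j n, ω i)) from rfl,
      ← comp, ih (fun k hk hk' => hJ k hk (by omega))]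
    rw [hJ (n + 1) (by omega) le_rfl, sum_ins_top (m+1) n (by omega), Finset.Icc_self,
      Finset.sum_singleton]
    simp only [add_sub_cancel_right]
    rcases le_total (J n) (I (n + 1)) with h | h
    · rw [max_eq_left (by linarith), max_eq_right (by linarith)]
      ring
    · rw [max_eq_right (by linarith), max_eq_left (by linarith)]
      ring

/-- Two-level last-passage values: with `H_{(m,0),(n,1)}` given by the explicit max formula
and `(Ĩ_k, J_k)` computed by the queueing recursion, one has, for each `k ∈ [m,n]`,
`H_{(m,0),(n,1)} = I_{m+1} + ⋯ + I_k + J_k + Ĩ_{k+1} + ⋯ + Ĩ_n`. -/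
theorem two_level_LPP_alternative (m n : ℤ) (hmn : m ≤ n) (I ω Itil J : ℤ → ℝ)
    (hInn : ∀ i, 0 ≤ I i) (hωnn : ∀ i, 0 ≤ ω i) (hJm : 0 ≤ J m)
    (hItil : ∀ k, m < k → k ≤ n → Itil k = ω k + max (I k - J (k - 1)) 0)
    (hJ : ∀ k, m < k → k ≤ n → J k = ω k + max (J (k - 1) - I k) 0) :
    ∀ k, m ≤ k → k ≤ n →
      Finset.sup' (Finset.Icc m n) (Finset.nonempty_Icc.mpr hmn)
        (fun j => if j = m then J m + ∑ i ∈ Finset.Icc (m + 1) n, ω i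
          else (∑ i ∈ Finset.Icc (m + 1) j, I i) + ∑ i ∈ Finset.Icc j n, ω i)
      = (∑ i ∈ Finset.Icc (m + 1) k, I i) + J k + ∑ i ∈ Finset.Icc (k + 1) n, Itil i := by
  have hsup := sup_aux m I ω J n hmn hJ
  -- show the RHS is constant in k, by downward induction from n
  suffices h : ∀ k, k ≤ n → m ≤ k →
      (∑ i ∈ Finset.Icc (m + 1) k, I i) + J k + ∑ i ∈ Finset.Icc (k + 1) n, Itil i
        = (∑ i ∈ Finset.Icc (m + 1) n, I i) + J n by
    intro k hk hk'
    rw [hsup, ← h k hk' hk]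
  intro k hk
  refine Int.le_induction_down (motive := fun k _ => m ≤ k →
      (∑ i ∈ Finset.Icc (m + 1) k, I i) + J k + ∑ i ∈ Finset.Icc (k + 1) n, Itil i
        = (∑ i ∈ Finset.Icc (m + 1) n, I i) + J n) ?_ ?_ k hk
  · intro _
    rw [Finset.Icc_eq_empty_of_lt (show n < n + 1 by omega)]
    simp
  · intro k hkn ih hm'
    have hkn' : k ≤ n := hkn
    have hmk : m < k := by omega
    rw [← ih (by omega)]
    have hsplit : (∑ i ∈ Finset.Icc (m+1) k, I i)
        = (∑ i ∈ Finset.Icc (m+1) (k-1), I i) + I k := by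
      have := sum_ins_top (m+1) (k-1) (by omega) I
      simpa [show k - 1 + 1 = k by ring] using this
    rw [hsplit, show k - 1 + 1 = k from by ring,
      sum_ins_bot k n (by omega) Itil, hItil k hmk hkn', hJ k hmk hkn']
    rcases le_total (J (k-1)) (I k) with h | h
    · rw [max_eq_left (by linarith), max_eq_right (by linarith)]
      ring
    · rw [max_eq_right (by linarith), max_eq_left (by linarith)]
      ring
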